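/- Let (y, z, θ) solve the translator system with μ = 0 and f(θ₀) ≠ 0, where f(θ) = −(θ − θ₀ + λ)·sin θ. Then sin θ(s) ≠ 0 for every s ∈ ℝ (so z is strictly monotone on ℝ), and the set { s ∈ ℝ : cos θ(s) = 0 } contains at most one element (so y has at most one critical point). -/

import Mathlib

open Real Filter Topology

theorem stmt8
    (lam μ θ₀ : ℝ) (y z θ : ℝ → ℝ)
    (hy0 : y 0 = 0) (hz0 : z 0 = 0) (hθ0 : θ 0 = θ₀)
    (hy : ∀ s : ℝ, HasDerivAt y (Real.exp (z s) * Real.cos (θ s)) s)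
    (hz : ∀ s : ℝ, HasDerivAt z (Real.sin (θ s)) s)
    (hθ : ∀ s : ℝ, HasDerivAt θ
      (-lam * Real.exp (-z s) * Real.sin (θ s) +
        μ * (Real.cos (θ s) - y s * Real.exp (-z s) * Real.sin (θ s))) s)
    (hμ : μ = 0)
    (hne : μ * Real.cos θ₀ - (θ₀ - θ₀ + lam) * Real.sin θ₀ ≠ 0) :
    (∀ s : ℝ, Real.sin (θ s) ≠ 0) ∧
    (StrictMono z ∨ StrictAnti z) ∧
    {s : ℝ | Real.cos (θ s) = 0}.Subsingleton := by
  subst hμ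
  simp only [zero_mul, zero_sub, neg_ne_zero, sub_self, zero_add] at hne
  have hlam : lam ≠ 0 := fun h => hne (by rw [h, zero_mul])
  have hsθ0 : Real.sin θ₀ ≠ 0 := fun h => hne (by rw [h, mul_zero])
  have hθ' : ∀ s : ℝ, HasDerivAt θ (-lam * Real.exp (-z s) * Real.sin (θ s)) s := by
    intro s
    simpa using hθ s
  -- continuity
  have hzc : Continuous z :=
    continuous_iff_continuousAt.2 fun s => (hz s).continuousAt
  have hθc : Continuous θ :=
    continuous_iff_continuousAt.2 fun s => (hθ' s).continuousAt
  -- the coefficient c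
  set c : ℝ → ℝ := fun s => -lam * Real.exp (-z s) * Real.cos (θ s) with hc
  have hcc : Continuous c := by
    apply Continuous.mul
    · exact continuous_const.mul (Real.continuous_exp.comp hzc.neg)
    · exact Real.continuous_cos.comp hθc
  set C : ℝ → ℝ := fun s => ∫ t in (0:ℝ)..s, c t with hC
  have hCd : ∀ s : ℝ, HasDerivAt C (c s) s := by
    intro s
    exact intervalIntegral.integral_hasDerivAt_right
      (hcc.intervalIntegrable 0 s)
      hcc.stronglyMeasurable.stronglyMeasurableAtFilter
      hcc.continuousAt
  have hC0 : C 0 = 0 := by simp [hC]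
  -- w = sin θ · exp (−C) is constant
  set w : ℝ → ℝ := fun s => Real.sin (θ s) * Real.exp (-C s) with hw
  have hwd : ∀ s : ℝ, HasDerivAt w 0 s := by
    intro s
    have h1 : HasDerivAt (fun s => Real.sin (θ s))
        (Real.cos (θ s) * (-lam * Real.exp (-z s) * Real.sin (θ s))) s :=
      (Real.hasDerivAt_sin (θ s)).comp s (hθ' s)
    have h2 : HasDerivAt (fun s => Real.exp (-C s))
        (Real.exp (-C s) * (-c s)) s :=
      by have h2' := (Real.hasDerivAt_exp (-C s)).comp s ((hCd s).neg); exact h2'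
    have := h1.mul h2
    refine this.congr_deriv ?_
    simp only [hc]
    ring
  have hwconst : ∀ s : ℝ, w s = w 0 := by
    intro s
    exact is_const_of_deriv_eq_zero (fun x => (hwd x).differentiableAt)
      (fun x => (hwd x).deriv) s 0
  have hw0 : w 0 = Real.sin θ₀ := by simp [hw, hθ0, hC0]
  have key : ∀ s : ℝ, Real.sin (θ s) = Real.sin θ₀ * Real.exp (C s) := by
    intro s
    have h := (hwconst s).trans hw0
    have : Real.sin (θ s) * Real.exp (-C s) = Real.sin θ₀ := h
    rw [← this, mul_assoc, ← Real.exp_add, neg_add_cancel, Real.exp_zero, mul_one]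
  have hsne : ∀ s : ℝ, Real.sin (θ s) ≠ 0 := by
    intro s
    rw [key s]
    exact mul_ne_zero hsθ0 (Real.exp_ne_zero _)
  refine ⟨hsne, ?_, ?_⟩
  · -- strict monotonicity of z
    rcases lt_or_gt_of_ne hsθ0 with hneg | hpos
    · right
      apply strictAnti_of_deriv_neg
      intro s
      rw [(hz s).deriv, key s]
      exact mul_neg_of_neg_of_pos hneg (Real.exp_pos _)
    · left
      apply strictMono_of_deriv_pos
      intro s
      rw [(hz s).deriv, key s]
      exact mul_pos hpos (Real.exp_pos _)
  · -- θ is injective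
    have hθinj : Function.Injective θ := by
      rcases lt_or_gt_of_ne hne with h | h
      · refine (strictMono_of_deriv_pos fun s => ?_).injective
        rw [(hθ' s).deriv, key s]
        nlinarith [mul_pos (neg_pos.2 h) (mul_pos (Real.exp_pos (-z s)) (Real.exp_pos (C s)))]
      · refine (strictAnti_of_deriv_neg fun s => ?_).injective
        rw [(hθ' s).deriv, key s]
        nlinarith [mul_pos h (mul_pos (Real.exp_pos (-z s)) (Real.exp_pos (C s)))]
    -- main subsingleton argument
    intro s₁ hs₁ s₂ hs₂
    simp only [Set.mem_setOf_eq] at hs₁ hs₂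
    rcases Real.cos_eq_zero_iff.1 hs₁ with ⟨k₁, hk₁⟩
    rcases Real.cos_eq_zero_iff.1 hs₂ with ⟨k₂, hk₂⟩
    apply hθinj
    rw [hk₁, hk₂]
    by_contra hne'
    have hkne : k₁ ≠ k₂ := by
      intro h; exact hne' (by rw [h])
    -- WLOG via a symmetric helper
    have main : ∀ a b : ℝ, ∀ m n : ℤ, θ a = (2 * m + 1) * π / 2 →
        θ b = (2 * n + 1) * π / 2 → m < n → False := by
      intro a b m n ha hb hmn
      have hπ := Real.pi_pos
      have hmem : ((m + 1 : ℤ) : ℝ) * π ∈ Set.uIcc (θ a) (θ b) := by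
        rw [ha, hb]
        constructor
        · apply inf_le_of_left_le
          have : (2 * (m:ℝ) + 1) ≤ 2 * ((m:ℝ) + 1) := by linarith
          push_cast
          nlinarith
        · apply le_sup_of_le_right
          have : (2 * ((m:ℝ) + 1)) ≤ 2 * (n:ℝ) + 1 := by
            have : (m:ℝ) + 1 ≤ n := by exact_mod_cast hmn
            linarith
          push_cast
          nlinarith
      obtain ⟨t, _, ht⟩ := intermediate_value_uIcc (hθc.continuousOn (s := Set.uIcc a b)) hmem
      exact hsne t (by rw [ht]; exact Real.sin_int_mul_pi _)
    rcases lt_or_gt_of_ne hkne with h | h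
    · exact main s₁ s₂ k₁ k₂ hk₁ hk₂ h
    · exact main s₂ s₁ k₂ k₁ hk₂ hk₁ h
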